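/- With ∂_W defined as the partial boundary operator ∂_W τ = Σ_{i : τ(v_i) ∈ W} (−1)^i ∂_i τ on singular chains of a space, and ∂ the full boundary operator, one has the anticommutation relation ∂ ∘ ∂_W = − ∂_W ∘ ∂. (Equivalently, writing ∂ = ∂_W + ∂_{W^c} on each simplex, ∂_{W^c} ∂_W = − ∂_W ∂_{W^c}.) -/

import Mathlib

noncomputable section

open scoped ENNReal

/-- The standard `k`-simplex, as a topological space. -/
abbrev Δ (k : ℕ) := {x : Fin (k + 1) → ℝ // x ∈ stdSimplex ℝ (Fin (k + 1))}

/-- Singular `k`-simplices in `X`: continuous maps `Δ^k → X`. -/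
abbrev SSimplex (X : Type*) [TopologicalSpace X] (k : ℕ) := C(Δ k, X)

/-- The affine embedding of `Δ^k` onto the `i`-th face of `Δ^{k+1}`. -/
def facePt {k : ℕ} (i : Fin (k + 2)) (x : Δ k) : Δ (k + 1) :=
  ⟨i.insertNth 0 x.1, by
    constructor
    · intro j
      refine i.succAboveCases ?_ ?_ j
      · simp
      · intro m
        simpa [Fin.insertNth_apply_succAbove] using x.2.1 m
    · rw [Fin.sum_univ_succAbove _ i]
      simpa [Fin.insertNth_apply_same, Fin.insertNth_apply_succAbove] using x.2.2⟩

/-- The face embedding as a continuous map. -/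
def faceC {k : ℕ} (i : Fin (k + 2)) : C(Δ k, Δ (k + 1)) :=
  ⟨facePt i, by
    apply Continuous.subtype_mk
    exact Continuous.finInsertNth i continuous_const (continuous_subtype_val)⟩

variable {X : Type*} [TopologicalSpace X]

/-- The `i`-th face of a singular simplex. -/
def face {k : ℕ} (i : Fin (k + 2)) (σ : SSimplex X (k + 1)) : SSimplex X k :=
  σ.comp (faceC i)

/-- The `i`-th vertex of the standard simplex. -/
def vtx {k : ℕ} (i : Fin (k + 1)) : Δ k :=
  ⟨fun j => if j = i then 1 else 0, by
    constructor
    · intro j; dsimp only; split <;> norm_num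
    · simp⟩

/-- Singular `k`-chains with real coefficients, as functions on singular simplices
(finiteness/local finiteness conditions are imposed separately). -/
abbrev Chain (X : Type*) [TopologicalSpace X] (k : ℕ) := SSimplex X k → ℝ

/-- A chain is an ordinary (finite) singular chain when it has finite support. -/
def FinSupp {k : ℕ} (c : Chain X k) : Prop := {σ | c σ ≠ 0}.Finite

open Classical in
/-- The boundary operator on chains. -/
def bdry {k : ℕ} (c : Chain X (k + 1)) : Chain X k :=
  fun τ => ∑ᶠ σ : SSimplex X (k + 1), ∑ i : Fin (k + 2),
    if face i σ = τ then (-1 : ℝ) ^ (i : ℕ) * c σ else 0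

/-- The ℓ¹-norm of a chain (with value in `ℝ≥0∞`). -/
def l1 {k : ℕ} (c : Chain X k) : ℝ≥0∞ := ∑' σ, ENNReal.ofReal |c σ|

open Classical in
/-- The indicator chain of a single singular simplex. -/
def single {k : ℕ} (σ : SSimplex X k) : Chain X k := fun τ => if τ = σ then 1 else 0

open Classical in
/-- Pushforward of a chain along a continuous map. -/
def push {Y : Type*} [TopologicalSpace Y] {k : ℕ} (g : C(X, Y)) (c : Chain X k) : Chain Y k :=
  fun τ => ∑ᶠ σ : SSimplex X k, if g.comp σ = τ then c σ else 0

open Classical in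
/-- The partial boundary operator `∂_W`: on a simplex `τ`,
`∂_W τ = Σ_{i : τ(v_i) ∈ W} (−1)^i ∂_i τ`, extended to chains.  Note that `∂ = ∂_{univ}` is
the full boundary operator. -/
def pbd (W : Set X) {k : ℕ} (c : Chain X (k + 1)) : Chain X k :=
  fun τ => ∑ᶠ σ : SSimplex X (k + 1), ∑ i : Fin (k + 2),
    if σ (vtx i) ∈ W ∧ face i σ = τ then (-1 : ℝ) ^ (i : ℕ) * c σ else 0


section Aux

def flipIdx {n : ℕ} (p : Fin (n + 2) × Fin (n + 1)) : Fin (n + 2) × Fin (n + 1) :=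
  if h : p.2.castSucc < p.1 then
    (p.2.castSucc, p.1.pred (by intro heq; rw [heq] at h; exact absurd h (Fin.not_lt_zero _)))
  else
    (p.2.succ, p.1.castPred (by
      intro heq
      exact absurd (heq ▸ not_lt.mp h) (not_le.mpr (Fin.castSucc_lt_last _))))

lemma flipIdx_fst {n : ℕ} (p : Fin (n + 2) × Fin (n + 1)) :
    (flipIdx p).1 = p.1.succAbove p.2 := by
  unfold flipIdx
  split_ifs with h
  · rw [Fin.succAbove_of_castSucc_lt _ _ h]
  · rw [Fin.succAbove_of_le_castSucc _ _ (not_lt.mp h)]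

lemma flipIdx_succAbove {n : ℕ} (p : Fin (n + 2) × Fin (n + 1)) :
    (flipIdx p).1.succAbove (flipIdx p).2 = p.1 := by
  unfold flipIdx
  split_ifs with h
  · rw [Fin.succAbove_of_le_castSucc, Fin.succ_pred]
    rw [Fin.le_castSucc_iff, Fin.succ_pred]; exact h
  · rw [Fin.succAbove_of_castSucc_lt, Fin.castSucc_castPred]
    rw [Fin.castSucc_castPred]
    exact (not_lt.mp h).trans_lt Fin.castSucc_lt_succ

lemma flipIdx_flipIdx {n : ℕ} (p : Fin (n + 2) × Fin (n + 1)) :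
    flipIdx (flipIdx p) = p := by
  have h1 := flipIdx_fst (flipIdx p)
  have h2 := flipIdx_succAbove (flipIdx p)
  rw [flipIdx_succAbove] at h1
  rw [h1] at h2
  rw [flipIdx_fst] at h2
  have := Fin.succAbove_right_injective (p := p.1) h2
  exact Prod.ext h1 this

lemma flipIdx_parity {n : ℕ} (p : Fin (n + 2) × Fin (n + 1)) :
    ((-1 : ℝ)) ^ ((p.1 : ℕ) + (p.2 : ℕ)) =
      -(-1 : ℝ) ^ (((flipIdx p).1 : ℕ) + ((flipIdx p).2 : ℕ)) := by
  have hodd : Odd ((p.1 : ℕ) + (p.2 : ℕ) + (((flipIdx p).1 : ℕ) + ((flipIdx p).2 : ℕ))) := by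
    unfold flipIdx
    split_ifs with h
    · simp only [Fin.coe_castSucc, Fin.coe_pred]
      have : (p.2 : ℕ) < (p.1 : ℕ) := h
      exact ⟨(p.2 : ℕ) + (p.1 : ℕ) - 1, by omega⟩
    · simp only [Fin.val_succ, Fin.coe_castPred]
      exact ⟨(p.1 : ℕ) + (p.2 : ℕ), by omega⟩
  rw [Nat.odd_add] at hodd
  rcases Nat.even_or_odd ((p.1 : ℕ) + (p.2 : ℕ)) with he | ho
  · have ho2 : Odd (((flipIdx p).1 : ℕ) + ((flipIdx p).2 : ℕ)) :=
      Nat.not_even_iff_odd.mp (fun heb => Nat.not_odd_iff_even.mpr he (hodd.mpr heb))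
    rw [Even.neg_one_pow he, Odd.neg_one_pow ho2]
    norm_num
  · have he2 : Even (((flipIdx p).1 : ℕ) + ((flipIdx p).2 : ℕ)) := hodd.mp ho
    rw [Odd.neg_one_pow ho, Even.neg_one_pow he2]

lemma facePt_coe {k : ℕ} (i : Fin (k + 2)) (x : Δ k) :
    (facePt i x).1 = i.insertNth (α := fun _ => ℝ) 0 x.1 := rfl

lemma vtx_coe {k : ℕ} (j : Fin (k + 1)) :
    (vtx j).1 = fun m => if m = j then (1:ℝ) else 0 := rfl

lemma facePt_vtx {k : ℕ} (i : Fin (k + 2)) (j : Fin (k + 1)) :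
    facePt i (vtx j) = vtx (i.succAbove j) := by
  apply Subtype.ext
  rw [facePt_coe, vtx_coe]
  funext m
  refine i.succAboveCases ?_ ?_ m
  · rw [Fin.insertNth_apply_same]
    show (0:ℝ) = if i = i.succAbove j then 1 else 0
    rw [if_neg (Fin.succAbove_ne i j).symm]
  · intro r
    rw [Fin.insertNth_apply_succAbove, vtx_coe]
    simp [Fin.succAbove_right_injective.eq_iff]

lemma face_vtx {k : ℕ} {X : Type*} [TopologicalSpace X] (σ : SSimplex X (k + 1)) (i : Fin (k + 2)) (j : Fin (k + 1)) :
    (face i σ) (vtx j) = σ (vtx (i.succAbove j)) := by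
  show σ (facePt i (vtx j)) = _
  rw [facePt_vtx]

lemma val_succAbove {n : ℕ} (p : Fin (n + 1)) (i : Fin n) :
    ((p.succAbove i : Fin (n+1)) : ℕ) = if (i : ℕ) < (p : ℕ) then (i : ℕ) else (i : ℕ) + 1 := by
  rw [Fin.succAbove]
  split_ifs with h h2 h3
  · simp
  · exact absurd h2 (by simpa [Fin.lt_def] using h)
  · exact absurd (by simpa [Fin.lt_def] using h3) h
  · simp

lemma succAbove_succAbove {n : ℕ} (i b : Fin (n + 3)) (j j' : Fin (n + 2))
    (h1 : i.succAbove j = b) (h2 : b.succAbove j' = i) (m : Fin (n + 1)) :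
    i.succAbove (j.succAbove m) = b.succAbove (j'.succAbove m) := by
  have e1 := congrArg Fin.val h1
  have e2 := congrArg Fin.val h2
  rw [val_succAbove] at e1 e2
  apply Fin.ext
  rw [val_succAbove, val_succAbove, val_succAbove, val_succAbove]
  split_ifs at e1 e2 ⊢ <;> omega

lemma facePt_facePt {k : ℕ} (i b : Fin (k + 3)) (j j' : Fin (k + 2))
    (h1 : i.succAbove j = b) (h2 : b.succAbove j' = i) (x : Δ k) :
    facePt i (facePt j x) = facePt b (facePt j' x) := by
  apply Subtype.ext
  rw [facePt_coe, facePt_coe]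
  funext m
  refine i.succAboveCases ?_ ?_ m
  · rw [Fin.insertNth_apply_same, ← h2, facePt_coe, Fin.insertNth_apply_succAbove, facePt_coe,
      Fin.insertNth_apply_same]
  · intro r
    refine j.succAboveCases ?_ ?_ r
    · rw [Fin.insertNth_apply_succAbove, facePt_coe, Fin.insertNth_apply_same, h1, facePt_coe,
        Fin.insertNth_apply_same]
    · intro m0
      have hx := succAbove_succAbove i b j j' h1 h2 m0
      conv_lhs => simp only [facePt_coe, Fin.insertNth_apply_succAbove]
      conv_rhs => rw [hx]; simp only [facePt_coe, Fin.insertNth_apply_succAbove]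

lemma face_face {k : ℕ} {X : Type*} [TopologicalSpace X] (σ : SSimplex X (k + 2))
    (i b : Fin (k + 3)) (j j' : Fin (k + 2))
    (h1 : i.succAbove j = b) (h2 : b.succAbove j' = i) :
    face j (face i σ) = face j' (face b σ) := by
  apply ContinuousMap.ext
  intro x
  show σ (facePt i (facePt j x)) = σ (facePt b (facePt j' x))
  rw [facePt_facePt i b j j' h1 h2]


open Classical in
lemma pbd_pbd {X : Type*} [TopologicalSpace X] (Wo Wi : Set X) {k : ℕ}
    (c : Chain X (k + 2)) (hc : FinSupp c) (τ : SSimplex X k) :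
    pbd Wo (pbd Wi c) τ = ∑ σ ∈ hc.toFinset, ∑ p : Fin (k + 3) × Fin (k + 2),
      if σ (vtx p.1) ∈ Wi ∧ σ (vtx (p.1.succAbove p.2)) ∈ Wo ∧ face p.2 (face p.1 σ) = τ
      then (-1 : ℝ) ^ ((p.1 : ℕ) + (p.2 : ℕ)) * c σ else 0 := by
  have hconv : ∀ σ : SSimplex X (k + 2), (∑ p : Fin (k + 3) × Fin (k + 2),
      if σ (vtx p.1) ∈ Wi ∧ σ (vtx (p.1.succAbove p.2)) ∈ Wo ∧ face p.2 (face p.1 σ) = τ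
      then (-1 : ℝ) ^ ((p.1 : ℕ) + (p.2 : ℕ)) * c σ else 0) =
      ∑ i : Fin (k + 3), ∑ j : Fin (k + 2),
      if σ (vtx i) ∈ Wi ∧ σ (vtx (i.succAbove j)) ∈ Wo ∧ face j (face i σ) = τ
      then (-1 : ℝ) ^ ((i : ℕ) + (j : ℕ)) * c σ else 0 := fun σ => Fintype.sum_prod_type _
  rw [Finset.sum_congr rfl (fun σ _ => hconv σ)]
  show _ = ∑ σ ∈ hc.toFinset, ∑ i : Fin (k + 3), ∑ j : Fin (k + 2),
      if σ (vtx i) ∈ Wi ∧ σ (vtx (i.succAbove j)) ∈ Wo ∧ face j (face i σ) = τ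
      then (-1 : ℝ) ^ ((i : ℕ) + (j : ℕ)) * c σ else 0
  classical
  set s := hc.toFinset with hs
  have hmem : ∀ σ, σ ∈ s ↔ c σ ≠ 0 := fun σ => hc.mem_toFinset
  have hinner : ∀ ρ : SSimplex X (k + 1), pbd Wi c ρ =
      ∑ σ ∈ s, ∑ i : Fin (k + 3),
        if σ (vtx i) ∈ Wi ∧ face i σ = ρ then (-1 : ℝ) ^ (i : ℕ) * c σ else 0 := by
    intro ρ
    apply finsum_eq_finset_sum_of_support_subset
    intro σ hσ
    simp only [Function.mem_support] at hσ
    rw [Finset.mem_coe, hmem]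
    intro h0
    apply hσ
    simp [h0]
  set T : Finset (SSimplex X (k + 1)) :=
    (s ×ˢ (Finset.univ : Finset (Fin (k + 3)))).image (fun q => face q.2 q.1) with hT
  have houter : pbd Wo (pbd Wi c) τ =
      ∑ ρ ∈ T, ∑ j : Fin (k + 2),
        if ρ (vtx j) ∈ Wo ∧ face j ρ = τ then (-1 : ℝ) ^ (j : ℕ) * pbd Wi c ρ else 0 := by
    apply finsum_eq_finset_sum_of_support_subset
    intro ρ hρ
    simp only [Function.mem_support] at hρ
    obtain ⟨j, -, hj⟩ : ∃ j ∈ Finset.univ, (if ρ (vtx j) ∈ Wo ∧ face j ρ = τ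
        then (-1 : ℝ) ^ (j : ℕ) * pbd Wi c ρ else 0) ≠ 0 := by
      by_contra hcon
      push_neg at hcon
      exact hρ (Finset.sum_eq_zero hcon)
    have hne : pbd Wi c ρ ≠ 0 := by
      intro h0; apply hj; rw [h0]; simp
    rw [hinner] at hne
    obtain ⟨σ, hσs, hσ⟩ : ∃ σ ∈ s, (∑ i : Fin (k + 3),
        if σ (vtx i) ∈ Wi ∧ face i σ = ρ then (-1 : ℝ) ^ (i : ℕ) * c σ else 0) ≠ 0 := by
      by_contra hcon
      push_neg at hcon
      exact hne (Finset.sum_eq_zero hcon)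
    obtain ⟨i, -, hi⟩ : ∃ i ∈ Finset.univ, (if σ (vtx i) ∈ Wi ∧ face i σ = ρ
        then (-1 : ℝ) ^ (i : ℕ) * c σ else 0) ≠ 0 := by
      by_contra hcon
      push_neg at hcon
      exact hσ (Finset.sum_eq_zero hcon)
    have : face i σ = ρ := by
      by_contra hfi
      exact hi (by simp [hfi])
    rw [Finset.mem_coe, hT, Finset.mem_image]
    exact ⟨(σ, i), Finset.mem_product.mpr ⟨hσs, Finset.mem_univ i⟩, this⟩
  rw [houter]
  have hdist : ∀ (ρ : SSimplex X (k + 1)) (j : Fin (k + 2)),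
      (if ρ (vtx j) ∈ Wo ∧ face j ρ = τ then (-1 : ℝ) ^ (j : ℕ) * pbd Wi c ρ else 0) =
      ∑ σ ∈ s, ∑ i : Fin (k + 3),
        if (ρ (vtx j) ∈ Wo ∧ face j ρ = τ) ∧ (σ (vtx i) ∈ Wi ∧ face i σ = ρ)
        then (-1 : ℝ) ^ (j : ℕ) * ((-1 : ℝ) ^ (i : ℕ) * c σ) else 0 := by
    intro ρ j
    rw [hinner]
    split_ifs with h
    · rw [Finset.mul_sum]
      refine Finset.sum_congr rfl (fun σ _ => ?_)
      rw [Finset.mul_sum]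
      refine Finset.sum_congr rfl (fun i _ => ?_)
      by_cases h1 : σ (vtx i) ∈ Wi ∧ face i σ = ρ
      · rw [if_pos h1, if_pos ⟨h, h1⟩]
      · rw [if_neg h1, if_neg (fun hcon => h1 hcon.2), mul_zero]
    · symm
      apply Finset.sum_eq_zero
      intro σ _
      apply Finset.sum_eq_zero
      intro i _
      rw [if_neg (by tauto)]
  rw [Finset.sum_congr rfl (fun ρ _ => Finset.sum_congr rfl (fun j _ => hdist ρ j))]
  -- now: ∑ ρ ∈ T, ∑ j, ∑ σ ∈ s, ∑ i, t
  -- reorder to ∑ σ ∈ s, ∑ i, ∑ j, ∑ ρ ∈ T, t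
  have hre : (∑ ρ ∈ T, ∑ j : Fin (k + 2), ∑ σ ∈ s, ∑ i : Fin (k + 3),
        if (ρ (vtx j) ∈ Wo ∧ face j ρ = τ) ∧ (σ (vtx i) ∈ Wi ∧ face i σ = ρ)
        then (-1 : ℝ) ^ (j : ℕ) * ((-1 : ℝ) ^ (i : ℕ) * c σ) else 0) =
      (∑ σ ∈ s, ∑ i : Fin (k + 3), ∑ j : Fin (k + 2), ∑ ρ ∈ T,
        if (ρ (vtx j) ∈ Wo ∧ face j ρ = τ) ∧ (σ (vtx i) ∈ Wi ∧ face i σ = ρ)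
        then (-1 : ℝ) ^ (j : ℕ) * ((-1 : ℝ) ^ (i : ℕ) * c σ) else 0) :=
    calc (∑ ρ ∈ T, ∑ j : Fin (k + 2), ∑ σ ∈ s, ∑ i : Fin (k + 3), if (ρ (vtx j) ∈ Wo ∧ face j ρ = τ) ∧ (σ (vtx i) ∈ Wi ∧ face i σ = ρ)
        then (-1 : ℝ) ^ (j : ℕ) * ((-1 : ℝ) ^ (i : ℕ) * c σ) else 0)
        = (∑ ρ ∈ T, ∑ σ ∈ s, ∑ j : Fin (k + 2), ∑ i : Fin (k + 3), if (ρ (vtx j) ∈ Wo ∧ face j ρ = τ) ∧ (σ (vtx i) ∈ Wi ∧ face i σ = ρ)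
        then (-1 : ℝ) ^ (j : ℕ) * ((-1 : ℝ) ^ (i : ℕ) * c σ) else 0) :=
          Finset.sum_congr rfl (fun ρ _ => Finset.sum_comm)
      _ = (∑ σ ∈ s, ∑ ρ ∈ T, ∑ j : Fin (k + 2), ∑ i : Fin (k + 3), if (ρ (vtx j) ∈ Wo ∧ face j ρ = τ) ∧ (σ (vtx i) ∈ Wi ∧ face i σ = ρ)
        then (-1 : ℝ) ^ (j : ℕ) * ((-1 : ℝ) ^ (i : ℕ) * c σ) else 0) := Finset.sum_comm
      _ = (∑ σ ∈ s, ∑ j : Fin (k + 2), ∑ ρ ∈ T, ∑ i : Fin (k + 3), if (ρ (vtx j) ∈ Wo ∧ face j ρ = τ) ∧ (σ (vtx i) ∈ Wi ∧ face i σ = ρ)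
        then (-1 : ℝ) ^ (j : ℕ) * ((-1 : ℝ) ^ (i : ℕ) * c σ) else 0) :=
          Finset.sum_congr rfl (fun σ _ => Finset.sum_comm)
      _ = (∑ σ ∈ s, ∑ j : Fin (k + 2), ∑ i : Fin (k + 3), ∑ ρ ∈ T, if (ρ (vtx j) ∈ Wo ∧ face j ρ = τ) ∧ (σ (vtx i) ∈ Wi ∧ face i σ = ρ)
        then (-1 : ℝ) ^ (j : ℕ) * ((-1 : ℝ) ^ (i : ℕ) * c σ) else 0) :=
          Finset.sum_congr rfl (fun σ _ => Finset.sum_congr rfl (fun j _ => Finset.sum_comm))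
      _ = (∑ σ ∈ s, ∑ i : Fin (k + 3), ∑ j : Fin (k + 2), ∑ ρ ∈ T, if (ρ (vtx j) ∈ Wo ∧ face j ρ = τ) ∧ (σ (vtx i) ∈ Wi ∧ face i σ = ρ)
        then (-1 : ℝ) ^ (j : ℕ) * ((-1 : ℝ) ^ (i : ℕ) * c σ) else 0) :=
          Finset.sum_congr rfl (fun σ _ => Finset.sum_comm)
  rw [hre]
  refine Finset.sum_congr rfl (fun σ hσs => ?_)
  refine Finset.sum_congr rfl (fun i _ => ?_)
  refine Finset.sum_congr rfl (fun j _ => ?_)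
  rw [Finset.sum_eq_single_of_mem (face i σ)
    (by rw [hT, Finset.mem_image]; exact ⟨(σ, i), Finset.mem_product.mpr ⟨hσs, Finset.mem_univ i⟩, rfl⟩)
    (fun ρ _ hne => by rw [if_neg (fun hcon => hne hcon.2.2.symm)])]
  rw [face_vtx]
  by_cases h1 : σ (vtx i) ∈ Wi
  · by_cases h2 : σ (vtx (i.succAbove j)) ∈ Wo
    · by_cases h3 : face j (face i σ) = τ
      · rw [if_pos ⟨⟨h2, h3⟩, h1, rfl⟩, if_pos ⟨h1, h2, h3⟩, pow_add]
        ring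
      · rw [if_neg (fun hcon => h3 hcon.1.2), if_neg (fun hcon => h3 hcon.2.2)]
    · rw [if_neg (fun hcon => h2 hcon.1.1), if_neg (fun hcon => h2 hcon.2.1)]
  · rw [if_neg (fun hcon => h1 hcon.2.1), if_neg (fun hcon => h1 hcon.1)]

end Aux

/-- The full boundary operator `∂ = ∂_{univ}` anticommutes with the partial
boundary operator: `∂ ∘ ∂_W = − ∂_W ∘ ∂`. -/
theorem bdry_pbd_anticomm {X : Type*} [TopologicalSpace X] (W : Set X) {k : ℕ}
    (c : Chain X (k + 2)) (hc : FinSupp c) :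
    pbd Set.univ (pbd W c) = - pbd W (pbd Set.univ c) := by
  classical
  funext τ
  rw [pbd_pbd Set.univ W c hc τ, Pi.neg_apply, pbd_pbd W Set.univ c hc τ, ← Finset.sum_neg_distrib]
  refine Finset.sum_congr rfl (fun σ _ => ?_)
  rw [← Finset.sum_neg_distrib]
  have hbij : Function.Bijective (flipIdx (n := k + 1)) :=
    Function.Involutive.bijective flipIdx_flipIdx
  refine Fintype.sum_bijective _ hbij _ _ (fun p => ?_)
  have hface := face_face σ p.1 (flipIdx p).1 p.2 (flipIdx p).2
    (flipIdx_fst p).symm (flipIdx_succAbove p)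
  simp only [Set.mem_univ, true_and, and_true]
  rw [flipIdx_succAbove p, ← hface]
  split_ifs with h
  · rw [flipIdx_parity p]; ring
  · ring
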